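/- arXiv:1203.3904 — 3 statements merged into one kernel-verified Lean document; each statement's English description precedes it below -/
import Mathlib

section
/- The position y is a flat output determining the full state: let ρ, ℓ > 0, let v, φ : ℝ → ℝ be continuous with v(t) ≠ 0 for all t, and let g : ℝ → M₃(ℝ) be differentiable with g(t) ∈ SO(3) for all t satisfying ġ(t) = g(t)·( (v(t)/ρ)·X(e₂) + (v(t)/ℓ)·tan φ(t) · X(e₃) ). Then with y(t) := ρ·g(t)e₃, the columns of g are recovered from y and v by g(t)e₁ = ẏ(t)/v(t), g(t)e₂ = (y(t) × ẏ(t))/(ρ·v(t)), and g(t)e₃ = y(t)/ρ. -/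
open Matrix

/-- The skew-symmetric matrix `X(n)` with `X(n) w = n × w`. -/
def skewMat (n : Fin 3 → ℝ) : Matrix (Fin 3) (Fin 3) ℝ :=
  !![0, -n 2, n 1; n 2, 0, -n 0; -n 1, n 0, 0]

/-- Cross product on `ℝ³`. -/
def crossVec (u v : Fin 3 → ℝ) : Fin 3 → ℝ :=
  ![u 1 * v 2 - u 2 * v 1, u 2 * v 0 - u 0 * v 2, u 0 * v 1 - u 1 * v 0]

/-- Differential flatness of the kinematic car on the sphere: for the left-invariant
model `ġ = g ((v/ρ) X(e₂) + (v/ℓ tan φ) X(e₃))` with `g(t) ∈ SO(3)` and `v(t) ≠ 0`,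
the columns of `g` are recovered from the flat output `y = ρ g e₃` and `v` by
`g e₁ = ẏ/v`, `g e₂ = (y × ẏ)/(ρ v)` and `g e₃ = y/ρ`. -/
theorem spherical_car_flat_output
    (ρ ℓ : ℝ) (hρ : 0 < ρ) (hℓ : 0 < ℓ) (v φ : ℝ → ℝ)
    (hv : Continuous v) (hφ : Continuous φ) (hvne : ∀ t, v t ≠ 0)
    (g : ℝ → Matrix (Fin 3) (Fin 3) ℝ)
    (hSO : ∀ t, (g t)ᵀ * g t = 1 ∧ (g t).det = 1)
    (hode : ∀ t i j, HasDerivAt (fun t => g t i j)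
      ((g t * ((v t / ρ) • skewMat ![0, 1, 0] +
        (v t / ℓ * Real.tan (φ t)) • skewMat ![0, 0, 1])) i j) t) :
    ∀ t,
      (g t).mulVec ![1, 0, 0] =
        (v t)⁻¹ • deriv (fun t => ρ • (g t).mulVec ![0, 0, 1]) t ∧
      (g t).mulVec ![0, 1, 0] =
        (ρ * v t)⁻¹ • crossVec (ρ • (g t).mulVec ![0, 0, 1])
          (deriv (fun t => ρ • (g t).mulVec ![0, 0, 1]) t) ∧
      (g t).mulVec ![0, 0, 1] = ρ⁻¹ • (ρ • (g t).mulVec ![0, 0, 1]) := by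
  intro t
  have hρ' : ρ ≠ 0 := ne_of_gt hρ
  have hv' := hvne t
  obtain ⟨horth, hdet⟩ := hSO t
  -- derivative of y
  have hy : HasDerivAt (fun t => ρ • (g t).mulVec ![0, 0, 1])
      (fun i => v t * g t i 0) t := by
    rw [hasDerivAt_pi]
    intro i
    have h := (hode t i 2).const_mul ρ
    have heq : (fun t => ρ * g t i 2) = fun t => (ρ • (g t).mulVec ![0, 0, 1]) i := by
      funext s
      simp [Matrix.mulVec, dotProduct, Fin.sum_univ_three]
    rw [heq] at h
    convert h using 1
    · rfl
    simp [Matrix.mul_apply, Fin.sum_univ_three, skewMat, Matrix.add_apply,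
      Matrix.smul_apply, Matrix.vecHead, Matrix.vecTail]
    field_simp
  have hder : deriv (fun t => ρ • (g t).mulVec ![0, 0, 1]) t = fun i => v t * g t i 0 :=
    hy.deriv
  -- adjugate equals transpose
  have hmul : g t * (g t)ᵀ = 1 := mul_eq_one_comm.mp horth
  have hadj : (g t).adjugate = (g t)ᵀ := by
    calc (g t).adjugate = (g t).adjugate * (g t * (g t)ᵀ) := by rw [hmul, mul_one]
    _ = ((g t).adjugate * g t) * (g t)ᵀ := by rw [mul_assoc]
    _ = (g t)ᵀ := by rw [Matrix.adjugate_mul, hdet, one_smul, one_mul]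
  refine ⟨?_, ?_, ?_⟩
  · rw [hder]
    funext i
    simp only [Pi.smul_apply, smul_eq_mul, ← mul_assoc, inv_mul_cancel₀ hv', one_mul]
    simp [Matrix.mulVec, dotProduct, Fin.sum_univ_three]
  · rw [hder]
    funext i
    have h1 : g t i 1 = (g t).adjugate 1 i := by rw [hadj]; rfl
    rw [Matrix.adjugate_fin_three] at h1
    fin_cases i <;>
      simp_all [Matrix.mulVec, dotProduct, Fin.sum_univ_three, crossVec] <;>
      field_simp [hρ', hvne t] <;> ring
  · funext i
    simp only [Pi.smul_apply, smul_eq_mul, ← mul_assoc, inv_mul_cancel₀ hρ', one_mul]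
end

section
/- The invariant feedback law assigns the contouring-error dynamics: let ρ > 0, c_σ > 0, let τ, β, τ_d, β_d : ℝ → ℝ³ and σ : ℝ → ℝ be differentiable, and let u : ℝ → ℝ be continuous, satisfying for all s: cos σ(s) = ⟨β(s), β_d(s)⟩, β'(s) = (u(s)/ρ)·τ(s), β_d'(s) = (1/ρ)·τ_d(s). Suppose at a point s we have sin σ(s) ≠ 0, ⟨τ(s), β_d(s)⟩ ≠ 0, and the feedback u(s) = ( ρ·c_σ·σ(s)·sin σ(s) − ⟨β(s), τ_d(s)⟩ ) / ⟨τ(s), β_d(s)⟩. Then σ'(s) = −c_σ·σ(s). -/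
/-- The invariant feedback law
`u = (ρ c_σ σ sin σ - ⟨β, τ_d⟩)/⟨τ, β_d⟩`
assigns the contouring-error dynamics `σ' = -c_σ σ` at every point where
`sin σ ≠ 0` and `⟨τ, β_d⟩ ≠ 0`. -/
theorem invariant_feedback_assigns_error_dynamics
    (ρ cσ : ℝ) (hρ : 0 < ρ) (hcσ : 0 < cσ)
    (τ β τd βd : ℝ → EuclideanSpace ℝ (Fin 3)) (σ : ℝ → ℝ) (u : ℝ → ℝ)
    (hτ : Differentiable ℝ τ) (hτd : Differentiable ℝ τd)
    (hσ : Differentiable ℝ σ) (hu : Continuous u)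
    (hcos : ∀ s, Real.cos (σ s) = (inner ℝ (β s) (βd s) : ℝ))
    (hβ : ∀ s, HasDerivAt β ((u s / ρ) • τ s) s)
    (hβd : ∀ s, HasDerivAt βd (ρ⁻¹ • τd s) s)
    (s : ℝ)
    (hsin : Real.sin (σ s) ≠ 0)
    (hproj : (inner ℝ (τ s) (βd s) : ℝ) ≠ 0)
    (hfeedback : u s =
      (ρ * cσ * σ s * Real.sin (σ s) - (inner ℝ (β s) (τd s) : ℝ)) /
        (inner ℝ (τ s) (βd s) : ℝ)) :
    deriv σ s = -cσ * σ s := by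
  have hσs : HasDerivAt σ (deriv σ s) s := (hσ s).hasDerivAt
  have h1 : HasDerivAt (fun t => Real.cos (σ t)) (-Real.sin (σ s) * deriv σ s) s := by
    exact ((Real.hasDerivAt_cos (σ s)).comp s hσs).congr_deriv (by ring)
  have h2 : HasDerivAt (fun t => (inner ℝ (β t) (βd t) : ℝ))
      ((inner ℝ (β s) (ρ⁻¹ • τd s) : ℝ) + (inner ℝ ((u s / ρ) • τ s) (βd s) : ℝ)) s :=
    (hβ s).inner ℝ (hβd s)
  have heq : (fun t => Real.cos (σ t)) = fun t => (inner ℝ (β t) (βd t) : ℝ) :=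
    funext hcos
  rw [heq] at h1
  have this1 := h2.unique h1
  rw [real_inner_smul_right, real_inner_smul_left, hfeedback] at this1
  set A := (inner ℝ (τ s) (βd s) : ℝ) with hA
  set B := (inner ℝ (β s) (τd s) : ℝ) with hB
  have hρ' : ρ ≠ 0 := ne_of_gt hρ
  field_simp at this1
  have key : Real.sin (σ s) * deriv σ s = Real.sin (σ s) * (-cσ * σ s) := by
    have h3 : ρ * (A * ρ) * (Real.sin (σ s) * deriv σ s)
        = ρ * (A * ρ) * (Real.sin (σ s) * (-cσ * σ s)) := by
      linear_combination (ρ * A) * this1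
    exact mul_left_cancel₀ (mul_ne_zero hρ' (mul_ne_zero hproj hρ')) h3
  exact mul_left_cancel₀ hsin key
end

section
/- Local asymptotic stability of the observer error by gain assignment: let ρ > 0 and let l₁₁, l₂₂, l₃₁, l₃₂ be real numbers with l₁₁ < 0, l₂₂ < 0, and l₃₁·ρ + 1 > 0. Then every complex eigenvalue λ of the 3×3 matrix M with rows (l₁₁, 0, −1/ρ), (0, l₂₂, 0), (l₃₁ + 1/ρ, l₃₂, 0) satisfies Re λ < 0 (M is a Hurwitz matrix). -/
open Matrix

lemma quad_neg (a q : ℝ) (ha : a < 0) (hq : 0 < q) (lam : ℂ)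
    (h : lam ^ 2 - (a : ℂ) * lam + (q : ℂ) = 0) : lam.re < 0 := by
  have hre := congrArg Complex.re h
  have him := congrArg Complex.im h
  set x := lam.re
  set y := lam.im
  simp [Complex.ext_iff, pow_two, Complex.mul_re, Complex.mul_im] at hre him
  have him' : y * (2 * x - a) = 0 := by ring_nf; ring_nf at him; linarith
  rcases mul_eq_zero.1 him' with hy | hx
  · nlinarith [sq_nonneg x]
  · nlinarith

/-- Local asymptotic stability of the linearized observer error dynamics by gain
assignment: if `l₁₁ < 0`, `l₂₂ < 0` and `l₃₁ ρ + 1 > 0`, then every complex eigenvalue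
of `M = ((l₁₁, 0, -1/ρ), (0, l₂₂, 0), (l₃₁ + 1/ρ, l₃₂, 0))` has negative real part,
i.e. `M` is Hurwitz. -/
theorem observer_error_matrix_hurwitz
    (ρ l₁₁ l₂₂ l₃₁ l₃₂ : ℝ) (hρ : 0 < ρ)
    (h11 : l₁₁ < 0) (h22 : l₂₂ < 0) (h31 : l₃₁ * ρ + 1 > 0) :
    ∀ lam : ℂ,
      (lam • (1 : Matrix (Fin 3) (Fin 3) ℂ) -
        (!![l₁₁, 0, -1 / ρ; 0, l₂₂, 0; l₃₁ + 1 / ρ, l₃₂, 0]).map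
          (fun x : ℝ => (x : ℂ))).det = 0 →
      lam.re < 0 := by
  intro lam h
  have hρ' : (ρ : ℂ) ≠ 0 := by exact_mod_cast hρ.ne'
  set q : ℝ := (l₃₁ * ρ + 1) / ρ ^ 2 with hqdef
  have hq : 0 < q := div_pos h31 (by positivity)
  have hfac : (lam - (l₂₂ : ℂ)) * (lam ^ 2 - (l₁₁ : ℂ) * lam + (q : ℂ)) = 0 := by
    rw [← h, hqdef]
    simp [Matrix.det_fin_three, Matrix.smul_apply, Matrix.one_apply, Matrix.map_apply,
      Matrix.vecHead, Matrix.vecTail]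
    field_simp
    ring
  rcases mul_eq_zero.1 hfac with h1 | h2
  · have : lam = (l₂₂ : ℂ) := by linear_combination h1
    rw [this]; simpa using h22
  · exact quad_neg l₁₁ q h11 hq lam h2
end
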